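/- Let K be a field complete with respect to a non-archimedean absolute value |·|, and let L₁,...,Lₙ ∈ K[X₁,...,Xₙ] be n linearly independent linear forms. Let ‖·‖ denote the sup norm on Kⁿ. Suppose x ∈ Kⁿ and j is an index such that |L_j(x)|/‖L_j‖ ≥ |L_i(x)|/‖L_i‖ for all i = 1,...,n. Then |L_j(x)|/‖L_j‖ ≥ ‖x‖·|det(L₁,...,Lₙ)| / ∏ᵢ‖L_i‖, where det(L₁,...,Lₙ) denotes the determinant of the matrix whose rows are the coefficient vectors of the L_i. -/

import Mathlib

open Finset

/-- Ultrametric Hadamard-type bound: the determinant norm is at most the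
product of the sup norms of the rows. -/
lemma det_norm_le_prod_rows {K : Type*} [NontriviallyNormedField K] [IsUltrametricDist K]
    {m : ℕ} (M : Fin m → Fin m → K) :
    ‖(Matrix.of M).det‖ ≤ ∏ i, ‖M i‖ := by
  rw [Matrix.det_apply]
  refine IsUltrametricDist.norm_sum_le_of_forall_le_of_nonneg
    (Finset.prod_nonneg fun i _ => norm_nonneg _) (fun σ _ => ?_)
  have hs : ‖Equiv.Perm.sign σ • ∏ i, Matrix.of M (σ i) i‖ = ‖∏ i, M (σ i) i‖ := by
    rcases Int.units_eq_one_or (Equiv.Perm.sign σ) with h | h <;>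
      simp [h, Matrix.of_apply]
  rw [hs, norm_prod]
  calc ∏ i, ‖M (σ i) i‖ ≤ ∏ i, ‖M (σ i)‖ :=
        Finset.prod_le_prod (fun i _ => norm_nonneg _)
          (fun i _ => norm_le_pi_norm (M (σ i)) i)
    _ = ∏ i, ‖M i‖ := Equiv.prod_comp σ (fun i => ‖M i‖)

lemma adjugate_norm_le {K : Type*} [NontriviallyNormedField K] [IsUltrametricDist K]
    {m : ℕ} (M : Fin m → Fin m → K) (k i : Fin m) :
    ‖(Matrix.of M).adjugate k i‖ ≤ ∏ l ∈ Finset.univ.erase i, ‖M l‖ := by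
  rw [Matrix.adjugate_apply]
  have h1 : ‖((Matrix.of M).updateRow i (Pi.single k 1)).det‖ ≤
      ∏ l, ‖((Matrix.of M).updateRow i (Pi.single k 1)) l‖ := by
    have := det_norm_le_prod_rows (fun a b => ((Matrix.of M).updateRow i (Pi.single k 1)) a b)
    exact this
  refine h1.trans ?_
  rw [← Finset.mul_prod_erase Finset.univ _ (Finset.mem_univ i)]
  have h2 : ‖((Matrix.of M).updateRow i (Pi.single k 1)) i‖ ≤ 1 := by
    rw [Matrix.updateRow_self]
    refine pi_norm_le_iff_of_nonneg zero_le_one |>.mpr fun a => ?_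
    rcases eq_or_ne a k with rfl | h
    · simp
    · simp [Pi.single_eq_of_ne h]
  have h3 : ∏ l ∈ Finset.univ.erase i, ‖((Matrix.of M).updateRow i (Pi.single k 1)) l‖ =
      ∏ l ∈ Finset.univ.erase i, ‖M l‖ := by
    refine Finset.prod_congr rfl fun l hl => ?_
    rw [Matrix.updateRow_ne (Finset.ne_of_mem_erase hl)]
    rfl
  rw [h3]
  calc ‖((Matrix.of M).updateRow i (Pi.single k 1)) i‖ * ∏ l ∈ Finset.univ.erase i, ‖M l‖
      ≤ 1 * ∏ l ∈ Finset.univ.erase i, ‖M l‖ :=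
        mul_le_mul_of_nonneg_right h2 (Finset.prod_nonneg fun _ _ => norm_nonneg _)
    _ = ∏ l ∈ Finset.univ.erase i, ‖M l‖ := one_mul _

/-- Non-archimedean version of a lemma on linear forms: if `|L j (x)|/‖L j‖` is
maximal among the `|L i (x)|/‖L i‖`, then it is at least
`‖x‖·|det(L₁,…,Lₙ)| / ∏ᵢ ‖L i‖`. -/
theorem stmt_0 {K : Type*} [NontriviallyNormedField K] [CompleteSpace K]
    [IsUltrametricDist K] (n : ℕ) (L : Fin n → Fin n → K)
    (hL : LinearIndependent K L) (x : Fin n → K) (j : Fin n)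
    (hj : ∀ i, ‖∑ k, L i k * x k‖ / ‖L i‖ ≤ ‖∑ k, L j k * x k‖ / ‖L j‖) :
    ‖x‖ * ‖(Matrix.of L).det‖ / ∏ i, ‖L i‖ ≤ ‖∑ k, L j k * x k‖ / ‖L j‖ := by
  set M : Matrix (Fin n) (Fin n) K := Matrix.of L with hMdef
  set y : Fin n → K := fun i => ∑ k, L i k * x k with hy
  set P : ℝ := ∏ i, ‖L i‖ with hPdef
  set R : ℝ := ‖y j‖ / ‖L j‖ with hR
  have hLnorm : ∀ i, 0 < ‖L i‖ := fun i => norm_pos_iff.mpr (hL.ne_zero i)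
  have hP : 0 < P := Finset.prod_pos fun i _ => hLnorm i
  have hR0 : 0 ≤ R := div_nonneg (norm_nonneg _) (norm_nonneg _)
  have hdet : M.det ≠ 0 := by
    have hunit : IsUnit M := Matrix.linearIndependent_rows_iff_isUnit.mp hL
    exact isUnit_iff_ne_zero.mp (M.isUnit_iff_isUnit_det.mp hunit)
  have hdetpos : 0 < ‖M.det‖ := norm_pos_iff.mpr hdet
  have hMx : M.mulVec x = y := by
    ext i
    simp [Matrix.mulVec, dotProduct, hy, hMdef]
  have hadj : M.adjugate.mulVec y = M.det • x := by
    rw [← hMx, Matrix.mulVec_mulVec, Matrix.adjugate_mul, Matrix.smul_mulVec,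
      Matrix.one_mulVec]
  have key : ∀ k, ‖M.det‖ * ‖x k‖ ≤ P * R := by
    intro k
    have hk : M.det * x k = ∑ i, M.adjugate k i * y i := by
      have := congrFun hadj k
      simpa [Matrix.mulVec, dotProduct] using this.symm
    rw [← norm_mul, hk]
    refine IsUltrametricDist.norm_sum_le_of_forall_le_of_nonneg
      (mul_nonneg hP.le hR0) (fun i _ => ?_)
    have herase : ∏ l ∈ Finset.univ.erase i, ‖L l‖ = P / ‖L i‖ := by
      rw [eq_div_iff (hLnorm i).ne', mul_comm]
      rw [hPdef]
      exact Finset.mul_prod_erase Finset.univ (fun l => ‖L l‖) (Finset.mem_univ i)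
    calc ‖M.adjugate k i * y i‖ = ‖M.adjugate k i‖ * ‖y i‖ := norm_mul _ _
      _ ≤ (∏ l ∈ Finset.univ.erase i, ‖L l‖) * ‖y i‖ :=
          mul_le_mul_of_nonneg_right (adjugate_norm_le L k i) (norm_nonneg _)
      _ = P * (‖y i‖ / ‖L i‖) := by rw [herase]; ring
      _ ≤ P * R := mul_le_mul_of_nonneg_left (hj i) hP.le
  have hx : ‖x‖ ≤ P * R / ‖M.det‖ := by
    refine pi_norm_le_iff_of_nonneg (div_nonneg (mul_nonneg hP.le hR0) hdetpos.le) |>.mpr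
      fun k => ?_
    rw [le_div_iff₀ hdetpos]
    calc ‖x k‖ * ‖M.det‖ = ‖M.det‖ * ‖x k‖ := mul_comm _ _
      _ ≤ P * R := key k
  rw [div_le_iff₀ hP]
  calc ‖x‖ * ‖M.det‖ ≤ (P * R / ‖M.det‖) * ‖M.det‖ :=
        mul_le_mul_of_nonneg_right hx hdetpos.le
    _ = P * R := div_mul_cancel₀ _ hdetpos.ne'
    _ = R * P := mul_comm _ _
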